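/- Let R be a ring, let A and B be right R-modules which are both hollow, and put M = A ⊕ B. Then every nonzero proper direct summand X of M is hollow. -/

import Mathlib

/-- A submodule `N` of `M` is *small* (superfluous) in `M` if `N + X ≠ M`
for every proper submodule `X` of `M`. -/
def IsSmallSubmodule {R M : Type*} [Ring R] [AddCommGroup M] [Module R M]
    (N : Submodule R M) : Prop :=
  ∀ X : Submodule R M, X ≠ ⊤ → N ⊔ X ≠ ⊤

/-- A nonzero module `M` is *hollow* if every proper submodule of `M` is small in `M`. -/
def IsHollowModule (R M : Type*) [Ring R] [AddCommGroup M] [Module R M] : Prop :=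
  Nontrivial M ∧ ∀ N : Submodule R M, N ≠ ⊤ → IsSmallSubmodule N

/-- A submodule `N` of `M` is *essential* in `M` if `N ∩ X ≠ 0`
for every nonzero submodule `X` of `M`. -/
def IsEssentialSubmodule {R M : Type*} [Ring R] [AddCommGroup M] [Module R M]
    (N : Submodule R M) : Prop :=
  ∀ X : Submodule R M, X ≠ ⊥ → N ⊓ X ≠ ⊥

/-- A nonzero module `M` is *uniform* if every nonzero submodule of `M` is essential in `M`. -/
def IsUniformModule (R M : Type*) [Ring R] [AddCommGroup M] [Module R M] : Prop :=
  Nontrivial M ∧ ∀ N : Submodule R M, N ≠ ⊥ → IsEssentialSubmodule N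

/-- `X` is a direct summand of `M`. -/
def IsDirectSummand {R M : Type*} [Ring R] [AddCommGroup M] [Module R M]
    (X : Submodule R M) : Prop :=
  ∃ Y : Submodule R M, IsCompl X Y

/-- A module `M` is *lifting* if for every submodule `N` of `M` there is a direct summand
`X` of `M` with `X ⊆ N` such that `N/X` is small in `M/X`. -/
def IsLiftingModule (R M : Type*) [Ring R] [AddCommGroup M] [Module R M] : Prop :=
  ∀ N : Submodule R M, ∃ X : Submodule R M,
    X ≤ N ∧ IsDirectSummand X ∧ IsSmallSubmodule (N.map X.mkQ)

/-- A module `M` is *extending* if for every submodule `N` of `M` there is a direct summand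
`X` of `M` such that `N` is essential in `X`. -/
def IsExtendingModule (R M : Type*) [Ring R] [AddCommGroup M] [Module R M] : Prop :=
  ∀ N : Submodule R M, ∃ X : Submodule R M,
    IsDirectSummand X ∧ N ≤ X ∧ ∀ Y : Submodule R M, Y ≤ X → Y ≠ ⊥ → N ⊓ Y ≠ ⊥

/-- A module is *uniserial* if its submodules are linearly ordered by inclusion. -/
def IsUniserialModule (R M : Type*) [Ring R] [AddCommGroup M] [Module R M] : Prop :=
  ∀ A B : Submodule R M, A ≤ B ∨ B ≤ A

/-- An internal finite direct sum decomposition `M = ⨁ᵢ Fᵢ`. -/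
def IsInternalDirectSum {R M ι : Type*} [Ring R] [AddCommGroup M] [Module R M]
    (F : ι → Submodule R M) : Prop :=
  (⨆ i, F i) = ⊤ ∧ ∀ i, Disjoint (F i) (⨆ j ∈ ({i}ᶜ : Set ι), F j)

/-- A module `M` satisfies the *finite internal exchange property* if for any direct
summand `X` of `M` and any finite direct sum decomposition `M = M₁ ⊕ ⋯ ⊕ Mₙ` there are
submodules `Mᵢ' ⊆ Mᵢ` with `M = X ⊕ M₁' ⊕ ⋯ ⊕ Mₙ'`. -/
def SatisfiesFIEP (R M : Type*) [Ring R] [AddCommGroup M] [Module R M] : Prop :=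
  ∀ (X : Submodule R M), IsDirectSummand X →
    ∀ (n : ℕ) (Mi : Fin n → Submodule R M), IsInternalDirectSum Mi →
      ∃ Mi' : Fin n → Submodule R M, (∀ i, Mi' i ≤ Mi i) ∧
        IsInternalDirectSum (fun o : Option (Fin n) => o.elim X Mi')

lemma hollow_of_surjective' {R M M' : Type*} [Ring R] [AddCommGroup M] [Module R M]
    [AddCommGroup M'] [Module R M'] (f : M →ₗ[R] M') (hf : Function.Surjective f)
    (h : IsHollowModule R M) (hnt : Nontrivial M') : IsHollowModule R M' := by
  refine ⟨hnt, fun N hN P hP hNP => ?_⟩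
  have key : ∀ Q : Submodule R M', Q.comap f = ⊤ → Q = ⊤ := by
    intro Q hQ
    have := Submodule.map_comap_eq_of_surjective hf Q
    rw [hQ, Submodule.map_top, LinearMap.range_eq_top.2 hf] at this
    exact this.symm
  have hsup : N.comap f ⊔ P.comap f = ⊤ := by
    rw [eq_top_iff]; intro a _
    have ha : f a ∈ N ⊔ P := hNP ▸ Submodule.mem_top
    obtain ⟨n, hn, p, hp, hnp⟩ := Submodule.mem_sup.1 ha
    obtain ⟨a', ha'⟩ := hf p
    refine Submodule.mem_sup.2 ⟨a - a', ?_, a', ?_, by abel⟩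
    · simp only [Submodule.mem_comap, map_sub, ha']
      rw [show f a - p = n by rw [← hnp]; abel]; exact hn
    · simpa [Submodule.mem_comap, ha'] using hp
  exact h.2 (N.comap f) (fun ht => hN (key _ ht)) (P.comap f)
    (fun ht => hP (key _ ht)) hsup

lemma quot_hollow' {R M H : Type*} [Ring R] [AddCommGroup M] [Module R M]
    [AddCommGroup H] [Module R H] (hH : IsHollowModule R H) (g : H →ₗ[R] M)
    {W : Submodule R M} (hW : W ≠ ⊤) (hsup : W ⊔ LinearMap.range g = ⊤) :
    IsHollowModule R (M ⧸ W) := by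
  have hnt : Nontrivial (M ⧸ W) := Submodule.Quotient.nontrivial_iff.2 hW
  refine hollow_of_surjective' (W.mkQ.comp g) ?_ hH hnt
  rw [← LinearMap.range_eq_top, LinearMap.range_comp, Submodule.map_mkQ_eq_top]
  exact hsup

lemma sup_split' {R M : Type*} [Ring R] [AddCommGroup M] [Module R M]
    {U V W : Submodule R M} (hq : IsHollowModule R (M ⧸ W))
    (h : (U ⊔ V) ⊔ W = ⊤) : U ⊔ W = ⊤ ∨ V ⊔ W = ⊤ := by
  by_contra hc
  push_neg at hc
  have h1 : U.map W.mkQ ≠ ⊤ := fun ht => hc.1 (by rwa [Submodule.map_mkQ_eq_top, sup_comm] at ht)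
  have h2 : V.map W.mkQ ≠ ⊤ := fun ht => hc.2 (by rwa [Submodule.map_mkQ_eq_top, sup_comm] at ht)
  refine hq.2 _ h1 _ h2 ?_
  rw [← Submodule.map_sup, Submodule.map_mkQ_eq_top, sup_comm]
  exact h

lemma sup_compl_ne_top' {R M : Type*} [Ring R] [AddCommGroup M] [Module R M]
    {X Y W : Submodule R M} (hc : IsCompl X Y) (hle : W ≤ X) (hne : W ≠ X) :
    W ⊔ Y ≠ ⊤ := by
  intro h
  apply hne
  have h2 := sup_inf_assoc_of_le (x := W) Y hle
  rw [h, top_inf_eq, inf_comm, disjoint_iff.1 hc.disjoint, sup_bot_eq] at h2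
  exact h2.symm

lemma no_cover' {R M H : Type*} [Ring R] [AddCommGroup M] [Module R M]
    [AddCommGroup H] [Module R H] (hH : IsHollowModule R H) (g : H →ₗ[R] M)
    {X Y W : Submodule R M} (hc : IsCompl X Y) (hXT : X ≠ ⊤) (hle : W ≤ X) (hne : W ≠ X)
    (hWg : W ⊔ LinearMap.range g = ⊤) : False := by
  have hWtop : W ≠ ⊤ := fun h => hXT (top_le_iff.1 (h ▸ hle))
  have hq := quot_hollow' hH g hWtop hWg
  have htot : (X ⊔ Y) ⊔ W = ⊤ := by rw [hc.sup_eq_top, top_sup_eq]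
  rcases sup_split' hq htot with h | h
  · exact hXT (by rwa [sup_eq_left.2 hle] at h)
  · exact sup_compl_ne_top' hc hle hne (by rwa [sup_comm] at h)

lemma map_eq_top_iff'' {R M M' : Type*} [Ring R] [AddCommGroup M] [Module R M]
    [AddCommGroup M'] [Module R M'] (f : M →ₗ[R] M') (hf : Function.Surjective f)
    (W : Submodule R M) : W.map f = ⊤ ↔ W ⊔ LinearMap.ker f = ⊤ :=
  LinearMap.map_eq_top_iff (LinearMap.range_eq_top.2 hf)

/-- If `A` and `B` are hollow right `R`-modules and `M = A ⊕ B`, then every nonzero proper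
direct summand `X` of `M` is hollow. -/
theorem stmt_0 {R A B : Type*} [Ring R] [AddCommGroup A] [AddCommGroup B]
    [Module R A] [Module R B]
    (hA : IsHollowModule R A) (hB : IsHollowModule R B)
    (X : Submodule R (A × B)) (hX0 : X ≠ ⊥) (hXT : X ≠ ⊤) (hXds : IsDirectSummand X) :
    IsHollowModule R ↥X := by
  obtain ⟨Y, hc⟩ := hXds
  have hnt : Nontrivial ↥X := Submodule.nontrivial_iff_ne_bot.2 hX0
  refine ⟨hnt, fun N' hN' Z' hZ' hsup => ?_⟩
  set N := N'.map X.subtype with hNdef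
  set Z := Z'.map X.subtype with hZdef
  have hinj : Function.Injective (Submodule.map X.subtype) :=
    Submodule.map_injective_of_injective X.injective_subtype
  have hNle : N ≤ X := Submodule.map_subtype_le X N'
  have hZle : Z ≤ X := Submodule.map_subtype_le X Z'
  have hNX : N ≠ X := fun h => hN' (hinj (by rw [← hNdef, h, Submodule.map_subtype_top]))
  have hZX : Z ≠ X := fun h => hZ' (hinj (by rw [← hZdef, h, Submodule.map_subtype_top]))
  have hNZ : N ⊔ Z = X := by
    rw [hNdef, hZdef, ← Submodule.map_sup, hsup, Submodule.map_subtype_top]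
  have hXY : X ⊔ Y = ⊤ := hc.sup_eq_top
  -- project to each factor
  have hsplitA : ∀ U V : Submodule R A, U ⊔ V = ⊤ → U = ⊤ ∨ V = ⊤ := by
    intro U V h; by_contra hcon; push_neg at hcon; exact hA.2 U hcon.1 V hcon.2 h
  have hsplitB : ∀ U V : Submodule R B, U ⊔ V = ⊤ → U = ⊤ ∨ V = ⊤ := by
    intro U V h; by_contra hcon; push_neg at hcon; exact hB.2 U hcon.1 V hcon.2 h
  have hfst : ∀ W : Submodule R (A × B),
      W.map (LinearMap.fst R A B) = ⊤ ↔ W ⊔ LinearMap.range (LinearMap.inr R A B) = ⊤ := by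
    intro W
    rw [map_eq_top_iff'' _ LinearMap.fst_surjective, LinearMap.range_inr]
  have hsnd : ∀ W : Submodule R (A × B),
      W.map (LinearMap.snd R A B) = ⊤ ↔ W ⊔ LinearMap.range (LinearMap.inl R A B) = ⊤ := by
    intro W
    rw [map_eq_top_iff'' _ LinearMap.snd_surjective, LinearMap.range_inl]
  have htotA : N.map (LinearMap.fst R A B) ⊔ (Z.map (LinearMap.fst R A B) ⊔
      Y.map (LinearMap.fst R A B)) = ⊤ := by
    rw [← Submodule.map_sup, ← Submodule.map_sup, ← sup_assoc, hNZ, hXY,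
      Submodule.map_top, LinearMap.range_eq_top.2 LinearMap.fst_surjective]
  have htotB : N.map (LinearMap.snd R A B) ⊔ (Z.map (LinearMap.snd R A B) ⊔
      Y.map (LinearMap.snd R A B)) = ⊤ := by
    rw [← Submodule.map_sup, ← Submodule.map_sup, ← sup_assoc, hNZ, hXY,
      Submodule.map_top, LinearMap.range_eq_top.2 LinearMap.snd_surjective]
  -- if N or Z covers a factor, contradiction
  have hkillA : ∀ W : Submodule R (A × B), W ≤ X → W ≠ X →
      W.map (LinearMap.fst R A B) ≠ ⊤ := by
    intro W hle hne h
    exact no_cover' hB (LinearMap.inr R A B) hc hXT hle hne ((hfst W).1 h)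
  have hkillB : ∀ W : Submodule R (A × B), W ≤ X → W ≠ X →
      W.map (LinearMap.snd R A B) ≠ ⊤ := by
    intro W hle hne h
    exact no_cover' hA (LinearMap.inl R A B) hc hXT hle hne ((hsnd W).1 h)
  have hYA : Y.map (LinearMap.fst R A B) = ⊤ := by
    rcases hsplitA _ _ htotA with h | h
    · exact absurd h (hkillA N hNle hNX)
    rcases hsplitA _ _ h with h' | h'
    · exact absurd h' (hkillA Z hZle hZX)
    · exact h'
  have hYB : Y.map (LinearMap.snd R A B) = ⊤ := by
    rcases hsplitB _ _ htotB with h | h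
    · exact absurd h (hkillB N hNle hNX)
    rcases hsplitB _ _ h with h' | h'
    · exact absurd h' (hkillB Z hZle hZX)
    · exact h'
  -- so Y ⊔ (A×0) = ⊤, hence M ⧸ Y is hollow (image of A)
  have hYtop : Y ≠ ⊤ := by
    intro h
    apply hX0
    have := disjoint_iff.1 hc.disjoint
    rwa [h, inf_top_eq] at this
  have hq : IsHollowModule R ((A × B) ⧸ Y) :=
    quot_hollow' hA (LinearMap.inl R A B) hYtop ((hsnd Y).1 hYB)
  have htot : (N ⊔ Z) ⊔ Y = ⊤ := by rw [hNZ, hXY]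
  rcases sup_split' hq htot with h | h
  · exact sup_compl_ne_top' hc hNle hNX h
  · exact sup_compl_ne_top' hc hZle hZX h
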